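/- Let p and l be distinct primes, k ≥ 1, and let G = C_l ⋊ C_{p^k} be a semidirect product of a cyclic group C_l of order l by a cyclic group C_{p^k} of order p^k acting faithfully on C_l. Writing C_{p^{k-1}} for the index-p subgroup of the complement C_{p^k}, the combination C_{p^{k-1}} − p·C_{p^k} − (C_l ⋊ C_{p^{k-1}}) + p·G is a Brauer relation in G, i.e. Ind_{C_{p^{k-1}}}^G 1 − p·Ind_{C_{p^k}}^G 1 − Ind_{C_l ⋊ C_{p^{k-1}}}^G 1 + p·1_G = 0. -/

import Mathlib

open scoped Pointwise


/-- The value at `g` of the character of the permutation representation of `G`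
on the coset space `G ⧸ H`, i.e. `Ind_H^G 1_H (g) = |{x ∈ G/H : g • x = x}|`. -/
noncomputable def indTrivChar {G : Type*} [Group G] (H : Subgroup G) (g : G) : ℤ :=
  Nat.card {x : G ⧸ H // g • x = x}

/-- A formal `ℤ`-linear combination of subgroups of `G` is a Brauer relation if
`∑_H n_H Ind_H^G 1_H = 0`. -/
def IsBrauerRelation {G : Type*} [Group G] (c : Subgroup G →₀ ℤ) : Prop :=
  ∀ g : G, (c.sum fun H n => n * indTrivChar H g) = 0

/-- A group is `p`-quasi-elementary if it has a cyclic normal subgroup of `p`-power index. -/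
def IsPQuasiElementary (p : ℕ) (G : Type*) [Group G] : Prop :=
  ∃ C : Subgroup G, C.Normal ∧ IsCyclic C ∧ ∃ k : ℕ, C.index = p ^ k

/-- A group is quasi-elementary if it is `p`-quasi-elementary for some prime `p`. -/
def IsQuasiElementary (G : Type*) [Group G] : Prop :=
  ∃ p : ℕ, p.Prime ∧ IsPQuasiElementary p G

section Counting

variable {G : Type*} [Group G] [Finite G]

omit [Finite G] in
private lemma smul_coset_iff (H : Subgroup G) (g x : G) :
    g • (x : G ⧸ H) = (x : G ⧸ H) ↔ x⁻¹ * g * x ∈ H := by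
  have h1 : g • (x : G ⧸ H) = ((g * x : G) : G ⧸ H) := rfl
  rw [h1, QuotientGroup.eq]
  have h2 : (g * x)⁻¹ * x = (x⁻¹ * g * x)⁻¹ := by group
  rw [h2, H.inv_mem_iff]

omit [Finite G] in
private lemma card_fix_mul_card (H : Subgroup G) (g : G) :
    Nat.card {q : G ⧸ H // g • q = q} * Nat.card H
      = Nat.card {x : G // x⁻¹ * g * x ∈ H} := by
  rw [← Nat.card_prod]
  apply Nat.card_congr
  have mem1 : ∀ (q : {q : G ⧸ H // g • q = q}) (h : H),
      (q.1.out * (h : G))⁻¹ * g * (q.1.out * (h : G)) ∈ H := by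
    intro q h
    have hq : q.1.out⁻¹ * g * q.1.out ∈ H := by
      rw [← smul_coset_iff H g, QuotientGroup.out_eq']
      exact q.2
    have he : (q.1.out * (h : G))⁻¹ * g * (q.1.out * (h : G))
        = (h : G)⁻¹ * (q.1.out⁻¹ * g * q.1.out) * (h : G) := by group
    rw [he]
    exact H.mul_mem (H.mul_mem (H.inv_mem h.2) hq) h.2
  refine ⟨fun qh => ⟨qh.1.1.out * (qh.2 : G), mem1 qh.1 qh.2⟩,
      fun x => (⟨(x.1 : G ⧸ H), (smul_coset_iff H g x.1).mpr x.2⟩,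
        ⟨((x.1 : G ⧸ H)).out⁻¹ * x.1, QuotientGroup.eq.mp (QuotientGroup.out_eq' _)⟩),
      ?_, ?_⟩
  · rintro ⟨⟨q, hq⟩, h⟩
    have hcoset : ((q.out * (h : G) : G) : G ⧸ H) = q := by
      rw [QuotientGroup.mk_mul_of_mem _ h.2, QuotientGroup.out_eq']
    refine Prod.ext (Subtype.ext hcoset) (Subtype.ext ?_)
    show (((q.out * (h : G) : G) : G ⧸ H)).out⁻¹ * (q.out * (h : G)) = (h : G)
    rw [hcoset]
    group
  · rintro ⟨x, hx⟩
    apply Subtype.ext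
    show ((x : G ⧸ H)).out * (((x : G ⧸ H)).out⁻¹ * x) = x
    group

omit [Group G] in
private lemma card_split (Q R : G → Prop) :
    Nat.card {x : G // Q x}
      = Nat.card {x : G // Q x ∧ R x} + Nat.card {x : G // Q x ∧ ¬ R x} := by
  classical
  rw [← Nat.card_sum]
  apply Nat.card_congr
  exact (((Equiv.subtypeSubtypeEquivSubtypeInter Q R).symm.sumCongr
    (Equiv.subtypeSubtypeEquivSubtypeInter Q (fun x => ¬ R x)).symm).trans
    (Equiv.sumCompl fun y : {x : G // Q x} => R y.1)).symm

omit [Group G] in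
private lemma card_split' (R : G → Prop) :
    Nat.card G = Nat.card {x : G // R x} + Nat.card {x : G // ¬ R x} := by
  classical
  rw [← Nat.card_sum]
  exact Nat.card_congr (Equiv.sumCompl R).symm

end Counting

/-- In `G = C_l ⋊ C_{p^k}` (distinct primes `p ≠ l`, faithful action,
`k ≥ 1`), writing `P' = C_{p^{k-1}}` for the index-`p` subgroup of the complement
`P = C_{p^k}`, the combination `P' − p·P − (C ⊔ P') + p·G` is a Brauer relation:
`Ind_{P'}^G 1 − p·Ind_P^G 1 − Ind_{C ⊔ P'}^G 1 + p·Ind_G^G 1 = 0`. -/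
theorem brauer_relation_of_semidirect (G : Type*) [Group G] [Finite G]
    (p l k : ℕ) (hp : p.Prime) (hl : l.Prime) (hne : p ≠ l) (hk : 1 ≤ k)
    (C P : Subgroup G) [C.Normal] (hcomp : Subgroup.IsComplement' C P)
    (hC : Nat.card C = l) (hPcyc : IsCyclic P) (hP : Nat.card P = p ^ k)
    (hfaith : ∀ x ∈ P, (∀ c ∈ C, x * c * x⁻¹ = c) → x = 1)
    (P' : Subgroup G) (hP'le : P' ≤ P) (hP'card : Nat.card P' = p ^ (k - 1)) :
    ∀ g : G,
      indTrivChar P' g - (p : ℤ) * indTrivChar P g - indTrivChar (C ⊔ P') g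
        + (p : ℤ) * indTrivChar (⊤ : Subgroup G) g = 0 := by
  intro g
  classical
  haveI : Fact l.Prime := ⟨hl⟩
  have hnG : Nonempty G := ⟨1⟩
  -- existence of decomposition
  have hex : ∀ y : G, ∃ c ∈ C, ∃ h ∈ P, c * h = y := by
    intro y
    obtain ⟨⟨c, h⟩, hch⟩ := hcomp.2 y
    exact ⟨c, c.2, h, h.2, hch⟩
  -- uniqueness of decomposition
  have huniq : ∀ {c₁ h₁ c₂ h₂ : G}, c₁ ∈ C → h₁ ∈ P → c₂ ∈ C → h₂ ∈ P →
      c₁ * h₁ = c₂ * h₂ → c₁ = c₂ ∧ h₁ = h₂ := by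
    intro c₁ h₁ c₂ h₂ hc₁ hh₁ hc₂ hh₂ heq
    have := hcomp.1 (a₁ := (⟨c₁, hc₁⟩, ⟨h₁, hh₁⟩)) (a₂ := (⟨c₂, hc₂⟩, ⟨h₂, hh₂⟩)) heq
    exact ⟨congrArg (fun z => (z.1 : G)) this, congrArg (fun z => (z.2 : G)) this⟩
  -- key: no nontrivial fixed points in C for h ∈ P \ P'
  have hfix : ∀ h ∈ P, h ∉ P' → ∀ d ∈ C, h * d * h⁻¹ = d → d = 1 := by
    intro h hh hh' d hd hcm
    by_contra hd1
    have hgen : ∀ c ∈ C, h * c * h⁻¹ = c := by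
      intro c hc
      have hmem : (⟨c, hc⟩ : C) ∈ Subgroup.zpowers (⟨d, hd⟩ : C) :=
        mem_zpowers_of_prime_card hC (fun hcon => hd1 (congrArg Subtype.val hcon))
      obtain ⟨n, hn⟩ := Subgroup.mem_zpowers_iff.mp hmem
      have hn' : d ^ n = c := by
        have := congrArg (Subtype.val) hn
        simpa using this
      have hz : h * d ^ n * h⁻¹ = (h * d * h⁻¹) ^ n := conj_zpow.symm
      rw [← hn', hz, hcm]
    have h1 : h = 1 := hfaith h hh hgen
    exact hh' (h1 ▸ P'.one_mem)
  -- membership in C ⊔ P'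
  have hmemsup : ∀ y : G, y ∈ C ⊔ P' ↔ ∃ c ∈ C, ∃ π ∈ P', c * π = y := by
    intro y
    constructor
    · intro hy
      have : y ∈ ((C : Set G) * (P' : Set G)) := by
        rw [← Subgroup.normal_mul]; exact hy
      rw [Set.mem_mul] at this
      obtain ⟨c, hc, π, hπ, h⟩ := this
      exact ⟨c, hc, π, hπ, h⟩
    · rintro ⟨c, hc, π, hπ, rfl⟩
      exact mul_mem (Subgroup.mem_sup_left hc) (Subgroup.mem_sup_right hπ)
  -- the main bijection
  have hbij : Nat.card {x : G // ¬ (x⁻¹ * g * x ∈ C ⊔ P')}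
      = Nat.card C * Nat.card {x : G // x⁻¹ * g * x ∈ P ∧ ¬ (x⁻¹ * g * x ∈ P')} := by
    rw [← Nat.card_prod]
    symm
    apply Nat.card_congr
    refine Equiv.ofBijective (fun dx => ⟨dx.2.1 * (dx.1 : G), ?_⟩) ⟨?_, ?_⟩
    · -- well-defined
      obtain ⟨⟨d, hd⟩, ⟨x, hx, hx'⟩⟩ := dx
      intro hbad
      have hrw : (x * d)⁻¹ * g * (x * d)
          = (d⁻¹ * ((x⁻¹ * g * x) * d * (x⁻¹ * g * x)⁻¹)) * (x⁻¹ * g * x) := by group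
      rw [hrw] at hbad
      obtain ⟨c, hc, π, hπ, hcp⟩ := (hmemsup _).mp hbad
      have hcmem : d⁻¹ * ((x⁻¹ * g * x) * d * (x⁻¹ * g * x)⁻¹) ∈ C :=
        C.mul_mem (C.inv_mem hd) (Subgroup.Normal.conj_mem ‹C.Normal› d hd _)
      have := (huniq hc (hP'le hπ) hcmem hx hcp).2
      exact hx' (this ▸ hπ)
    · -- injective
      rintro ⟨⟨d, hd⟩, ⟨x, hx, hx'⟩⟩ ⟨⟨d', hd'⟩, ⟨x', hx2, hx2'⟩⟩ heq
      have heq' : x * d = x' * d' := congrArg Subtype.val heq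
      have hx'eq : x' = x * (d * d'⁻¹) := by
        rw [← mul_assoc, heq']; group
      have he : d * d'⁻¹ ∈ C := C.mul_mem hd (C.inv_mem hd')
      have hdec : (1 : G) * (x'⁻¹ * g * x')
          = ((d * d'⁻¹)⁻¹ * ((x⁻¹ * g * x) * (d * d'⁻¹) * (x⁻¹ * g * x)⁻¹))
            * (x⁻¹ * g * x) := by
        rw [hx'eq]; group
      have hcmem : (d * d'⁻¹)⁻¹ * ((x⁻¹ * g * x) * (d * d'⁻¹) * (x⁻¹ * g * x)⁻¹) ∈ C :=
        C.mul_mem (C.inv_mem he) (Subgroup.Normal.conj_mem ‹C.Normal› _ he _)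
      obtain ⟨hcpart, hhpart⟩ := huniq C.one_mem hx2 hcmem hx hdec
      have hfixe : (x⁻¹ * g * x) * (d * d'⁻¹) * (x⁻¹ * g * x)⁻¹ = d * d'⁻¹ := by
        have h2 := inv_mul_eq_one.mp hcpart.symm
        exact h2.symm
      have he1 : d * d'⁻¹ = 1 := hfix _ hx hx' _ he hfixe
      have hdd : d = d' := mul_inv_eq_one.mp he1
      have hxx : x = x' := by rw [hx'eq, he1, mul_one]
      subst hdd
      subst hxx
      rfl
    · -- surjective
      rintro ⟨y, hy⟩
      obtain ⟨c, hc, h, hh, hch⟩ := hex (y⁻¹ * g * y)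
      have hh' : ¬ h ∈ P' := fun hmem => hy ((hmemsup _).mpr ⟨c, hc, h, hmem, hch⟩)
      have hτmem : ∀ d : C, (d : G)⁻¹ * (h * (d : G) * h⁻¹) ∈ C := fun d =>
        C.mul_mem (C.inv_mem d.2) (Subgroup.Normal.conj_mem ‹C.Normal› _ d.2 h)
      have hτinj : Function.Injective
          (fun d : C => (⟨(d : G)⁻¹ * (h * (d : G) * h⁻¹), hτmem d⟩ : C)) := by
        rintro ⟨u, hu⟩ ⟨v, hv⟩ huv
        have huv' : u⁻¹ * (h * u * h⁻¹) = v⁻¹ * (h * v * h⁻¹) := congrArg Subtype.val huv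
        have hconj : h * (v * u⁻¹) * h⁻¹ = v * u⁻¹ := by
          have h2 : v * (u⁻¹ * (h * u * h⁻¹)) = v * (v⁻¹ * (h * v * h⁻¹)) := by rw [huv']
          have h3 : v * u⁻¹ * (h * u * h⁻¹) = h * v * h⁻¹ := by
            rw [mul_assoc, h2]; group
          calc h * (v * u⁻¹) * h⁻¹ = (h * v * h⁻¹) * (h * u * h⁻¹)⁻¹ := by group
            _ = (v * u⁻¹ * (h * u * h⁻¹)) * (h * u * h⁻¹)⁻¹ := by rw [h3]
            _ = v * u⁻¹ := by group
        have := hfix h hh hh' (v * u⁻¹) (C.mul_mem hv (C.inv_mem hu)) hconj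
        exact Subtype.ext (mul_inv_eq_one.mp this).symm
      have hτsurj := Finite.surjective_of_injective hτinj
      obtain ⟨d, hdτ⟩ := hτsurj ⟨c, hc⟩
      have hdc : (d : G)⁻¹ * (h * (d : G) * h⁻¹) = c := congrArg Subtype.val hdτ
      have hxg : (y * (d : G)⁻¹)⁻¹ * g * (y * (d : G)⁻¹) = h := by
        have e1 : (y * (d : G)⁻¹)⁻¹ * g * (y * (d : G)⁻¹)
            = (d : G) * (y⁻¹ * g * y) * (d : G)⁻¹ := by group
        rw [e1, ← hch, ← hdc]; group
      refine ⟨⟨d, ⟨y * (d : G)⁻¹, ?_, ?_⟩⟩, ?_⟩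
      · rw [hxg]; exact hh
      · rw [hxg]; exact hh'
      · apply Subtype.ext
        show y * (d : G)⁻¹ * (d : G) = y
        group
  -- cardinalities
  have eTop : Nat.card {x : G // x⁻¹ * g * x ∈ (⊤ : Subgroup G)} = Nat.card G :=
    Nat.card_congr (Equiv.subtypeUnivEquiv fun x => Subgroup.mem_top _)
  have hGcard : Nat.card G = l * p ^ k := by
    rw [← hcomp.card_mul, hC, hP]
  have hGpos : 0 < Nat.card G := Nat.card_pos
  have htop1 : Nat.card {q : G ⧸ (⊤ : Subgroup G) // g • q = q} = 1 := by
    have h1 := card_fix_mul_card (⊤ : Subgroup G) g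
    rw [eTop, Subgroup.card_top] at h1
    exact Nat.eq_of_mul_eq_mul_right hGpos (by rw [h1, one_mul])
  have hsupcard : Nat.card (C ⊔ P' : Subgroup G) = l * p ^ (k - 1) := by
    have hcop : Nat.Coprime (Nat.card C) (Nat.card P') := by
      rw [hC, hP'card]
      exact ((Nat.coprime_primes hl hp).mpr (fun h => hne h.symm)).pow_right _
    have hdis : Disjoint C P' := disjoint_iff.mpr (Subgroup.inf_eq_bot_of_coprime hcop)
    have hcc : Nat.card (C ⊔ P' : Subgroup G) = Nat.card C * Nat.card P' := by
      rw [← Nat.card_prod]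
      symm; apply Nat.card_congr
      refine Equiv.ofBijective (fun cp => ⟨(cp.1 : G) * cp.2,
        mul_mem (Subgroup.mem_sup_left cp.1.2) (Subgroup.mem_sup_right cp.2.2)⟩) ⟨?_, ?_⟩
      · intro a b hab
        exact Subgroup.mul_injective_of_disjoint hdis (congrArg Subtype.val hab)
      · rintro ⟨y, hy⟩
        obtain ⟨c, hc, π, hπ, hcp⟩ := (hmemsup y).mp hy
        exact ⟨(⟨c, hc⟩, ⟨π, hπ⟩), Subtype.ext hcp⟩
    rw [hcc, hC, hP'card]
  -- abbreviations for the fixed-point counts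
  have c1 := card_fix_mul_card P' g
  have c2 := card_fix_mul_card P g
  have c3 := card_fix_mul_card (C ⊔ P') g
  rw [hP'card] at c1
  rw [hP] at c2
  rw [hsupcard] at c3
  set FP' := Nat.card {q : G ⧸ P' // g • q = q} with hFP'
  set FP := Nat.card {q : G ⧸ P // g • q = q} with hFP
  set FS := Nat.card {q : G ⧸ (C ⊔ P') // g • q = q} with hFS
  set NP' := Nat.card {x : G // x⁻¹ * g * x ∈ P'} with hNP'
  set NP := Nat.card {x : G // x⁻¹ * g * x ∈ P} with hNP
  set NS := Nat.card {x : G // x⁻¹ * g * x ∈ C ⊔ P'} with hNS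
  set NB := Nat.card {x : G // ¬ (x⁻¹ * g * x ∈ C ⊔ P')} with hNB
  set NA := Nat.card {x : G // x⁻¹ * g * x ∈ P ∧ ¬ (x⁻¹ * g * x ∈ P')} with hNA
  have e5 : l * p ^ k = NS + NB := by rw [← hGcard]; exact card_split' _
  have e6 : NP = NP' + NA := by
    have h6 := card_split (fun x : G => x⁻¹ * g * x ∈ P) (fun x => x⁻¹ * g * x ∈ P')
    have h6' : Nat.card {x : G // x⁻¹ * g * x ∈ P ∧ x⁻¹ * g * x ∈ P'} = NP' :=
      Nat.card_congr (Equiv.subtypeEquivRight fun x => ⟨fun h => h.2, fun h => ⟨hP'le h, h⟩⟩)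
    rw [h6'] at h6
    exact h6
  have e7 : NB = l * NA := by rw [hbij, hC]
  -- key natural-number identity
  have key : NS + l * NP = l * NP' + l * p ^ k := by
    calc NS + l * NP = NS + (l * NP' + l * NA) := by rw [e6, Nat.mul_add]
      _ = l * NP' + (NS + NB) := by rw [e7]; ring
      _ = l * NP' + l * p ^ k := by rw [← e5]
  -- substitute the fixed-point counts
  have hpk : p ^ k = p ^ (k - 1) * p := by
    rw [← pow_succ, Nat.sub_add_cancel hk]
  have key2 : (l * p ^ (k - 1)) * (FS + p * FP) = (l * p ^ (k - 1)) * (FP' + p) := by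
    have lhs : (l * p ^ (k - 1)) * (FS + p * FP) = FS * (l * p ^ (k - 1)) + l * (FP * p ^ k) := by
      rw [hpk]; ring
    have rhs : (l * p ^ (k - 1)) * (FP' + p) = l * (FP' * p ^ (k - 1)) + l * p ^ k := by
      rw [hpk]; ring
    rw [lhs, rhs, c1, c2, c3]
    exact key
  have hlp_pos : 0 < l * p ^ (k - 1) :=
    Nat.mul_pos hl.pos (pow_pos hp.pos _)
  have hfin : FS + p * FP = FP' + p := Nat.eq_of_mul_eq_mul_left hlp_pos key2
  -- conclude
  show (FP' : ℤ) - (p : ℤ) * FP - FS + (p : ℤ)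
      * (Nat.card {q : G ⧸ (⊤ : Subgroup G) // g • q = q} : ℤ) = 0
  rw [htop1]
  have hz : (FS : ℤ) + (p : ℤ) * FP = (FP' : ℤ) + p := by exact_mod_cast hfin
  push_cast
  linarith [hz]
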